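/- Let $(n_0, n_1, \ldots, n_N)$ be positive integers with ordered version $\tilde{n}_0 \le \cdots \le \tilde{n}_N$, and suppose $N \ge 2$ and $\tilde{n}_1 = \tilde{n}_2 = \cdots = \tilde{n}_N$. Then the maximum diversity of the amplify-and-forward scheme satisfies $d^{AF}(0) = \sum_{i=1}^{\tilde{n}_0} c_i \ge \frac{\tilde{n}_0(\tilde{n}_1 + 1)}{2}$, where $c_i = 1 - i + \min_{k=1,\ldots,N} \lfloor (\sum_{l=0}^{k} \tilde{n}_l - i)/k \rfloor$. -/

import Mathlib

lemma gauss_int (m : ℕ) : 2 * ∑ i ∈ Finset.Icc (1:ℤ) (m:ℤ), i = m * (m + 1) := by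
  induction m with
  | zero => simp
  | succ m ih =>
    have h : Finset.Icc (1:ℤ) ((m:ℤ)+1) = insert ((m:ℤ)+1) (Finset.Icc (1:ℤ) (m:ℤ)) := by
      ext x; simp [Finset.mem_Icc, Finset.mem_insert]; omega
    push_cast
    rw [h, Finset.sum_insert (by simp)]
    push_cast at ih
    ring_nf
    ring_nf at ih
    omega

/-- Lower bound on the maximum diversity of the AF scheme: if
`ñ₁ = ñ₂ = ⋯ = ñ_N` (and `N ≥ 2`), then `∑_{i=1}^{ñ₀} c_i ≥ ñ₀(ñ₁+1)/2`. -/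
theorem af_max_diversity_lower (N : ℕ) (hN : 2 ≤ N) (n : ℕ → ℤ)
    (hpos : ∀ l, l ≤ N → 0 < n l)
    (hmono : ∀ l, l < N → n l ≤ n (l + 1))
    (heq : ∀ l, 1 ≤ l → l ≤ N → n l = n 1)
    (c : ℤ → ℤ)
    (hc : ∀ i : ℤ, c i = 1 - i +
      (Finset.Icc 1 N).inf' (Finset.nonempty_Icc.mpr (by omega))
        (fun k => Int.fdiv ((∑ l ∈ Finset.range (k + 1), n l) - i) (k : ℤ))) :
    ((n 0 : ℚ) * (n 1 + 1)) / 2 ≤ ((∑ i ∈ Finset.Icc (1 : ℤ) (n 0), c i : ℤ) : ℚ) := by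
  have ha : 0 < n 0 := hpos 0 (by omega)
  have hb : 0 < n 1 := hpos 1 (by omega)
  have hab : n 0 ≤ n 1 := hmono 0 (by omega)
  -- partial sums
  have hsum : ∀ k, 1 ≤ k → k ≤ N → ∑ l ∈ Finset.range (k + 1), n l = n 0 + k * n 1 := by
    intro k hk1 hkN
    induction k with
    | zero => omega
    | succ k ih =>
      rcases Nat.eq_or_lt_of_le hk1 with h1 | h1
      · simp [Finset.sum_range_succ, ← h1]
      · have hk : 1 ≤ k := by omega
        rw [Finset.sum_range_succ, ih hk (by omega), heq (k+1) (by omega) hkN]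
        push_cast; ring
  -- pointwise bound
  have key : ∀ i ∈ Finset.Icc (1:ℤ) (n 0), n 1 + 1 - i ≤ c i := by
    intro i hi
    rw [Finset.mem_Icc] at hi
    rw [hc i]
    have hinf : n 1 ≤ (Finset.Icc 1 N).inf' (Finset.nonempty_Icc.mpr (by omega))
        (fun k => Int.fdiv ((∑ l ∈ Finset.range (k + 1), n l) - i) (k : ℤ)) := by
      apply Finset.le_inf'
      intro k hk
      rw [Finset.mem_Icc] at hk
      have hk0 : (0:ℤ) < (k:ℤ) := by exact_mod_cast hk.1
      rw [hsum k hk.1 hk.2, Int.fdiv_eq_ediv_of_nonneg _ (le_of_lt hk0)]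
      have : n 0 + (k:ℤ) * n 1 - i = (n 0 - i) + n 1 * (k:ℤ) := by ring
      rw [this, Int.add_mul_ediv_right _ _ (by omega : (k:ℤ) ≠ 0)]
      have : 0 ≤ (n 0 - i) / (k:ℤ) := Int.ediv_nonneg (by omega) (le_of_lt hk0)
      omega
    omega
  -- sum bound
  have hsumle : ∑ i ∈ Finset.Icc (1:ℤ) (n 0), (n 1 + 1 - i) ≤
      ∑ i ∈ Finset.Icc (1:ℤ) (n 0), c i := Finset.sum_le_sum key
  -- compute LHS sum
  obtain ⟨m, hm⟩ : ∃ m : ℕ, n 0 = (m:ℤ) := ⟨(n 0).toNat, by omega⟩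
  have hcard : (Finset.Icc (1:ℤ) (n 0)).card = m := by
    rw [hm, Int.card_Icc]; simp
  have hsplit : ∑ i ∈ Finset.Icc (1:ℤ) (n 0), (n 1 + 1 - i)
      = (m:ℤ) * (n 1 + 1) - ∑ i ∈ Finset.Icc (1:ℤ) (n 0), i := by
    rw [Finset.sum_sub_distrib, Finset.sum_const, hcard]
    ring
  have hg := gauss_int m
  rw [← hm] at hg
  -- now reduce to an integer inequality
  have : n 0 * (n 1 + 1) ≤ 2 * ∑ i ∈ Finset.Icc (1:ℤ) (n 0), c i := by
    have h2 : 2 * ∑ i ∈ Finset.Icc (1:ℤ) (n 0), (n 1 + 1 - i)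
        = 2 * (m:ℤ) * (n 1 + 1) - n 0 * (n 0 + 1) := by
      rw [hsplit]; rw [hm] at hg ⊢; ring_nf; ring_nf at hg; omega
    nlinarith [hsumle, hm, hab, ha]
  rw [div_le_iff₀ (by norm_num : (0:ℚ) < 2)]
  exact_mod_cast (by linarith : n 0 * (n 1 + 1) ≤ (∑ i ∈ Finset.Icc (1:ℤ) (n 0), c i) * 2)
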